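/- Let ε ∈ (0,1), δ ∈ (0,1), let A be any probability measure on [0,∞] and let u : [0,∞] → [0,1] be a measurable, monotonically decreasing utility function, and let κ ∈ (0,∞) satisfy u(κ) = ε/2. If t₁, …, t_m are independent samples from A with m ≥ (ln(2/δ)/2) · ((2−ε)/ε)², and t_j^{(κ)} := min{t_j, κ} denotes the capped samples, then with probability at least 1−δ the capped sample mean utility is within ε of the true uncapped mean utility: Pr( | (1/m) Σ_{j=1}^m u(t_j^{(κ)}) − E_{t∼A}[u(t)] | ≥ ε ) ≤ δ. -/

import Mathlib

open Real

private lemma hoeff_div_helper (G E : ℝ) (hG : G ≠ 0) :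
    (E * G - E * E) / G ^ 2 = E / G * (1 - E / G) := by
  field_simp

private lemma hoeff_phi_le {p : ℝ} (hp0 : 0 < p) (hp1 : p < 1) (h : ℝ) :
    -p * h + Real.log (1 - p + p * Real.exp h) ≤ h ^ 2 / 8 := by
  set g : ℝ → ℝ := fun x => 1 - p + p * Real.exp x with hg
  have hgpos : ∀ x, 0 < g x := fun x => by
    have := Real.exp_pos x
    simp only [hg]
    nlinarith
  set s : ℝ → ℝ := fun x => p * Real.exp x / g x with hs
  set φ : ℝ → ℝ := fun x => -p * x + Real.log (g x) with hφ
  set φ' : ℝ → ℝ := fun x => -p + s x with hφ'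
  set ψ : ℝ → ℝ := fun x => x ^ 2 / 8 - φ x with hψ
  set ψ' : ℝ → ℝ := fun x => x / 4 - φ' x with hψ'
  have hgd : ∀ x, HasDerivAt g (p * Real.exp x) x := fun x => by
    exact ((Real.hasDerivAt_exp x).const_mul p).const_add (1 - p)
  have hφd : ∀ x, HasDerivAt φ (φ' x) x := fun x => by
    have h1 : HasDerivAt (fun x => Real.log (g x)) (p * Real.exp x / g x) x :=
      (hgd x).log (hgpos x).ne'
    exact (((hasDerivAt_id x).const_mul (-p)).add h1).congr_deriv (by simp [hφ', hs])
  have hsrange : ∀ x, 0 < s x ∧ s x < 1 := fun x => by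
    have hG := hgpos x
    have he := Real.exp_pos x
    constructor
    · exact div_pos (by positivity) hG
    · rw [div_lt_one hG]
      simp only [hg]
      nlinarith
  have hφ'd : ∀ x, HasDerivAt φ' (s x * (1 - s x)) x := fun x => by
    have h1 : HasDerivAt (fun y => p * Real.exp y / g y)
        ((p * Real.exp x * g x - p * Real.exp x * (p * Real.exp x)) / g x ^ 2) x :=
      ((Real.hasDerivAt_exp x).const_mul p).div (hgd x) (hgpos x).ne'
    rw [hoeff_div_helper _ _ (hgpos x).ne'] at h1
    exact ((hasDerivAt_const x (-p)).add h1).congr_deriv (by simp [hs])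
  have hψ'd : ∀ x, HasDerivAt ψ' (1 / 4 - s x * (1 - s x)) x := fun x => by
    have h0 : HasDerivAt (fun x : ℝ => x / 4) (1 / 4) x := by
      simpa using (hasDerivAt_id x).div_const 4
    exact h0.sub (hφ'd x)
  have hψd : ∀ x, HasDerivAt ψ (ψ' x) x := fun x => by
    have h0 : HasDerivAt (fun x : ℝ => x ^ 2 / 8) (x / 4) x := by
      have h1 := (hasDerivAt_pow 2 x).div_const 8
      have h2 : (2 : ℕ) * x ^ (2 - 1) / 8 = x / 4 := by
        norm_num
        ring
      rwa [h2] at h1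
    exact h0.sub (hφd x)
  have hψ'mono : Monotone ψ' :=
    monotone_of_deriv_nonneg (fun x => (hψ'd x).differentiableAt)
      (fun x => by
        rw [(hψ'd x).deriv]
        nlinarith [hsrange x, sq_nonneg (s x - 1/2)])
  have hψ'0 : ψ' 0 = 0 := by
    simp [hψ', hφ', hs, hg]
  have hψ0 : ψ 0 = 0 := by
    simp [hψ, hφ, hg]
  have hψcont : Continuous ψ := by
    have : Differentiable ℝ ψ := fun x => (hψd x).differentiableAt
    exact this.continuous
  have key : 0 ≤ ψ h := by
    rcases le_total 0 h with hh | hh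
    · have hmono : MonotoneOn ψ (Set.Ici 0) :=
        monotoneOn_of_deriv_nonneg (convex_Ici 0) hψcont.continuousOn
          (fun x _ => (hψd x).differentiableAt.differentiableWithinAt)
          (fun x hx => by
            rw [(hψd x).deriv, ← hψ'0]
            exact hψ'mono (le_of_lt (by simpa using hx)))
      have := hmono Set.self_mem_Ici hh hh
      rwa [hψ0] at this
    · have hanti : AntitoneOn ψ (Set.Iic 0) :=
        antitoneOn_of_deriv_nonpos (convex_Iic 0) hψcont.continuousOn
          (fun x _ => (hψd x).differentiableAt.differentiableWithinAt)
          (fun x hx => by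
            rw [(hψd x).deriv, ← hψ'0]
            exact hψ'mono (le_of_lt (by simpa using hx)))
      have := hanti (by exact hh) Set.self_mem_Iic hh
      rwa [hψ0] at this
  have : φ h ≤ h ^ 2 / 8 := by
    have := key
    simp only [hψ] at this
    linarith
  simpa [hφ] using this

/-- The scalar form of Hoeffding's lemma. -/
private lemma hoeff_scalar {p : ℝ} (hp0 : 0 ≤ p) (hp1 : p ≤ 1) (h : ℝ) :
    (1 - p) * Real.exp (-p * h) + p * Real.exp ((1 - p) * h) ≤ Real.exp (h ^ 2 / 8) := by
  have h8 : (0:ℝ) ≤ h ^ 2 / 8 := by positivity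
  rcases eq_or_lt_of_le hp0 with rfl | hp0'
  · simpa using Real.one_le_exp h8
  rcases eq_or_lt_of_le hp1 with rfl | hp1'
  · simpa using Real.one_le_exp h8
  have hkey := hoeff_phi_le hp0' hp1' h
  have hgpos : 0 < 1 - p + p * Real.exp h := by nlinarith [Real.exp_pos h]
  have lhs_eq : (1 - p) * Real.exp (-p * h) + p * Real.exp ((1 - p) * h)
      = Real.exp (-p * h + Real.log (1 - p + p * Real.exp h)) := by
    rw [Real.exp_add, Real.exp_log hgpos]
    rw [show (1 - p) * h = -p * h + h by ring, Real.exp_add]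
    ring
  rw [lhs_eq]
  exact Real.exp_le_exp.mpr hkey

open MeasureTheory ProbabilityTheory

/-- Hoeffding's lemma: mgf bound for a bounded centered random variable. -/
private lemma hoeff_mgf_le {Ω : Type*} [MeasurableSpace Ω] (μ : Measure Ω)
    [IsProbabilityMeasure μ] (X : Ω → ℝ) (hX : Measurable X) {a b : ℝ} (hab : a < b)
    (hbd : ∀ ω, X ω ∈ Set.Icc a b) (hmean : ∫ ω, X ω ∂μ = 0) (t : ℝ) :
    mgf X μ t ≤ Real.exp (t ^ 2 * (b - a) ^ 2 / 8) := by
  have hba : (0:ℝ) < b - a := by linarith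
  -- X is integrable
  have hXint : Integrable X μ := by
    refine Integrable.mono' (integrable_const (max |a| |b|)) hX.aestronglyMeasurable ?_
    refine Filter.Eventually.of_forall fun ω => ?_
    rcases hbd ω with ⟨h1, h2⟩
    rw [Real.norm_eq_abs, abs_le]
    constructor
    · calc -(max |a| |b|) ≤ -|a| := by simp
        _ ≤ a := neg_abs_le a
        _ ≤ X ω := h1
    · calc X ω ≤ b := h2
        _ ≤ |b| := le_abs_self b
        _ ≤ max |a| |b| := le_max_right _ _
  -- a ≤ 0 ≤ b
  have ha0 : a ≤ 0 := by
    by_contra hcon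
    push_neg at hcon
    have : a ≤ ∫ ω, X ω ∂μ := by
      have := integral_mono (integrable_const a) hXint (fun ω => (hbd ω).1)
      simpa using this
    linarith [hmean ▸ this]
  have hb0 : 0 ≤ b := by
    by_contra hcon
    push_neg at hcon
    have : ∫ ω, X ω ∂μ ≤ b := by
      have := integral_mono hXint (integrable_const b) (fun ω => (hbd ω).2)
      simpa using this
    linarith [hmean ▸ this]
  -- pointwise convexity bound
  have hconv : ∀ ω, Real.exp (t * X ω)
      ≤ (b - X ω) / (b - a) * Real.exp (t * a) + (X ω - a) / (b - a) * Real.exp (t * b) := by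
    intro ω
    rcases hbd ω with ⟨h1, h2⟩
    have hl1 : (0:ℝ) ≤ (b - X ω) / (b - a) := div_nonneg (by linarith) hba.le
    have hl2 : (0:ℝ) ≤ (X ω - a) / (b - a) := div_nonneg (by linarith) hba.le
    have hl3 : (b - X ω) / (b - a) + (X ω - a) / (b - a) = 1 := by
      field_simp
      ring
    have := convexOn_exp.2 (Set.mem_univ (t * a)) (Set.mem_univ (t * b)) hl1 hl2 hl3
    have harg : (b - X ω) / (b - a) * (t * a) + (X ω - a) / (b - a) * (t * b) = t * X ω := by
      field_simp
      ring
    rw [smul_eq_mul, smul_eq_mul, smul_eq_mul, smul_eq_mul, harg] at this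
    exact this
  -- integrate
  have hint_rhs : Integrable (fun ω =>
      (b - X ω) / (b - a) * Real.exp (t * a) + (X ω - a) / (b - a) * Real.exp (t * b)) μ := by
    apply Integrable.add
    · exact (((integrable_const b).sub hXint).div_const _).mul_const _
    · exact ((hXint.sub (integrable_const a)).div_const _).mul_const _
  have hint_lhs : Integrable (fun ω => Real.exp (t * X ω)) μ := by
    refine Integrable.mono' hint_rhs (Real.measurable_exp.comp (hX.const_mul t)).aestronglyMeasurable ?_
    refine Filter.Eventually.of_forall fun ω => ?_
    rw [Real.norm_eq_abs, abs_of_pos (Real.exp_pos _)]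
    exact hconv ω
  have hstep : mgf X μ t ≤ b / (b - a) * Real.exp (t * a) + (-a) / (b - a) * Real.exp (t * b) := by
    have h1 : mgf X μ t ≤ ∫ ω, ((b - X ω) / (b - a) * Real.exp (t * a)
        + (X ω - a) / (b - a) * Real.exp (t * b)) ∂μ :=
      integral_mono hint_lhs hint_rhs hconv
    set C1 : ℝ := b / (b - a) * Real.exp (t * a) + (-a) / (b - a) * Real.exp (t * b) with hC1
    set C2 : ℝ := (Real.exp (t * b) - Real.exp (t * a)) / (b - a) with hC2
    have heq : (fun ω => (b - X ω) / (b - a) * Real.exp (t * a)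
        + (X ω - a) / (b - a) * Real.exp (t * b)) = fun ω => C1 + C2 * X ω := by
      funext ω
      rw [hC1, hC2]
      field_simp
      ring
    rw [heq] at h1
    rw [integral_add (integrable_const C1) (hXint.const_mul C2), integral_const,
      integral_const_mul, hmean] at h1
    simpa using h1
  -- apply the scalar lemma with p = -a/(b-a), h = t*(b-a)
  set p : ℝ := -a / (b - a) with hp
  have hp0 : 0 ≤ p := div_nonneg (by linarith) hba.le
  have hp1 : p ≤ 1 := by
    rw [hp, div_le_one hba]
    linarith
  have hfinal := hoeff_scalar hp0 hp1 (t * (b - a))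
  have e1 : -p * (t * (b - a)) = t * a := by
    rw [hp]; field_simp
  have e2 : (1 - p) * (t * (b - a)) = t * b := by
    rw [hp]; field_simp; ring
  have e3 : (1 - p) = b / (b - a) := by
    rw [hp]; field_simp; ring
  have e4 : (t * (b - a)) ^ 2 / 8 = t ^ 2 * (b - a) ^ 2 / 8 := by ring
  rw [e1, e2, e3, e4] at hfinal
  calc mgf X μ t ≤ b / (b - a) * Real.exp (t * a) + (-a) / (b - a) * Real.exp (t * b) := hstep
    _ ≤ Real.exp (t ^ 2 * (b - a) ^ 2 / 8) := by rw [hp] at hfinal; linarith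

/-- Coordinates of a product probability measure are independent. -/
private lemma iIndepFun_eval {ι : Type*} [Fintype ι] {α : ι → Type*}
    [∀ i, MeasurableSpace (α i)] (A : ∀ i, Measure (α i)) [∀ i, IsProbabilityMeasure (A i)] :
    ProbabilityTheory.iIndepFun
      (fun i (ω : ∀ i, α i) => ω i) (Measure.pi A) := by
  classical
  rw [ProbabilityTheory.iIndepFun_iff_measure_inter_preimage_eq_mul]
  intro S sets hsets
  have heq : (⋂ i ∈ S, (fun ω : ∀ i, α i => ω i) ⁻¹' sets i)
      = Set.pi Set.univ (fun i => if i ∈ S then sets i else Set.univ) := by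
    ext ω
    simp only [Set.mem_iInter, Set.mem_preimage, Set.mem_pi, Set.mem_univ, true_implies]
    constructor
    · intro hω i
      by_cases hi : i ∈ S
      · simpa [hi] using hω i hi
      · simp [hi]
    · intro hω i hi
      have := hω i
      simpa [hi] using this
  rw [heq, Measure.pi_pi]
  have hone : ∀ i ∈ Finset.univ, i ∉ S →
      (A i) (if i ∈ S then sets i else Set.univ) = 1 := by
    intro i _ hi
    simp [hi]
  rw [← Finset.prod_subset (Finset.subset_univ S) hone]
  refine Finset.prod_congr rfl fun i hi => ?_
  have heval : ∀ i (s : Set (α i)), MeasurableSet s →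
      Measure.pi A ((fun ω : ∀ i, α i => ω i) ⁻¹' s) = A i s := by
    intro i s hs
    have : ((fun ω : ∀ i, α i => ω i) ⁻¹' s)
        = Set.pi Set.univ (Function.update (fun j => (Set.univ : Set (α j))) i s) := by
      rw [← Set.eval_preimage]
    rw [this, Measure.pi_pi]
    rw [Finset.prod_eq_single i (fun j _ hj => by simp [Function.update_of_ne hj])
      (fun h => absurd (Finset.mem_univ i) h)]
    simp
  rw [heval i (sets i) (hsets i hi)]
  simp [hi]

/-- Pushforward of a product measure under coordinate evaluation. -/
private lemma pi_map_eval {ι : Type*} [Fintype ι] {α : ι → Type*}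
    [∀ i, MeasurableSpace (α i)] (A : ∀ i, Measure (α i)) [∀ i, IsProbabilityMeasure (A i)]
    (i : ι) : (Measure.pi A).map (fun ω => ω i) = A i := by
  classical
  refine Measure.ext fun s hs => ?_
  rw [Measure.map_apply (measurable_pi_apply i) hs]
  have : ((fun ω : ∀ i, α i => ω i) ⁻¹' s)
      = Set.pi Set.univ (Function.update (fun j => (Set.univ : Set (α j))) i s) := by
    rw [← Set.eval_preimage]
  rw [this, Measure.pi_pi]
  rw [Finset.prod_eq_single i (fun j _ hj => by simp [Function.update_of_ne hj])
    (fun h => absurd (Finset.mem_univ i) h)]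
  simp

/-- One-sided Hoeffding tail bound for a sum of independent bounded centered variables. -/
private lemma hoeff_tail {Ω : Type*} [MeasurableSpace Ω] (P : Measure Ω)
    [IsProbabilityMeasure P] (m : ℕ) (Z : Fin m → Ω → ℝ) (hZmeas : ∀ j, Measurable (Z j))
    (hindep : ProbabilityTheory.iIndepFun Z P)
    {a b : ℝ} (hab : a < b) (hbd : ∀ j ω, Z j ω ∈ Set.Icc a b)
    (hmean : ∀ j, ∫ ω, Z j ω ∂P = 0) {r : ℝ} (hr : 0 < r) :
    (P {ω | (m : ℝ) * r ≤ ∑ j, Z j ω}).toReal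
      ≤ Real.exp (-2 * m * r ^ 2 / (b - a) ^ 2) := by
  have hba : (0:ℝ) < b - a := by linarith
  set c := b - a with hc
  set t : ℝ := 4 * r / c ^ 2 with ht
  have htpos : 0 < t := by positivity
  -- each exp (t * Z j) is integrable
  have hint : ∀ j, Integrable (fun ω => Real.exp (t * Z j ω)) P := by
    intro j
    refine Integrable.mono' (integrable_const (Real.exp (t * (|a| + |b|))))
      (Real.measurable_exp.comp ((hZmeas j).const_mul t)).aestronglyMeasurable ?_
    refine Filter.Eventually.of_forall fun ω => ?_
    rw [Real.norm_eq_abs, abs_of_pos (Real.exp_pos _), Real.exp_le_exp]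
    rcases hbd j ω with ⟨h1, h2⟩
    have : Z j ω ≤ |a| + |b| := by
      calc Z j ω ≤ b := h2
        _ ≤ |b| := le_abs_self b
        _ ≤ |a| + |b| := by linarith [abs_nonneg a]
    nlinarith
  have hintS : Integrable (fun ω => Real.exp (t * (∑ j, Z j) ω)) P :=
    hindep.integrable_exp_mul_sum hZmeas (fun j _ => hint j)
  have hchern := ProbabilityTheory.measure_ge_le_exp_mul_mgf ((m : ℝ) * r) htpos.le hintS
  have hsets : {ω | (m : ℝ) * r ≤ (∑ j, Z j) ω} = {ω | (m : ℝ) * r ≤ ∑ j, Z j ω} := by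
    ext ω
    simp [Finset.sum_apply]
  rw [hsets] at hchern
  have hmgf : ProbabilityTheory.mgf (∑ j, Z j) P t ≤ Real.exp ((m : ℝ) * (t ^ 2 * c ^ 2 / 8)) := by
    rw [hindep.mgf_sum hZmeas]
    calc ∏ j, ProbabilityTheory.mgf (Z j) P t
        ≤ ∏ _j : Fin m, Real.exp (t ^ 2 * c ^ 2 / 8) := by
          refine Finset.prod_le_prod (fun j _ => ProbabilityTheory.mgf_nonneg) fun j _ => ?_
          exact hoeff_mgf_le P (Z j) (hZmeas j) hab (fun ω => hbd j ω) (hmean j) t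
      _ = Real.exp ((m : ℝ) * (t ^ 2 * c ^ 2 / 8)) := by
          rw [Finset.prod_const, ← Real.exp_nat_mul]
          simp
  calc (P {ω | (m : ℝ) * r ≤ ∑ j, Z j ω}).toReal
      ≤ Real.exp (-t * ((m : ℝ) * r)) * ProbabilityTheory.mgf (∑ j, Z j) P t := hchern
    _ ≤ Real.exp (-t * ((m : ℝ) * r)) * Real.exp ((m : ℝ) * (t ^ 2 * c ^ 2 / 8)) := by
        exact mul_le_mul_of_nonneg_left hmgf (Real.exp_pos _).le
    _ = Real.exp (-2 * m * r ^ 2 / c ^ 2) := by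
        rw [← Real.exp_add]
        congr 1
        rw [ht]
        field_simp
        ring

open scoped ENNReal

theorem capped_sample_mean_estimates_utility
    (ε δ : ℝ) (hε : ε ∈ Set.Ioo (0 : ℝ) 1) (hδ : δ ∈ Set.Ioo (0 : ℝ) 1)
    (A : Measure ℝ≥0∞) [IsProbabilityMeasure A]
    (u : ℝ≥0∞ → ℝ) (hmeas : Measurable u) (hanti : Antitone u)
    (hrange : ∀ t, u t ∈ Set.Icc (0 : ℝ) 1)
    (κ : ℝ≥0∞) (hκ0 : 0 < κ) (hκtop : κ < ⊤) (huκ : u κ = ε / 2)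
    (m : ℕ) (hm : Real.log (2 / δ) / 2 * ((2 - ε) / ε) ^ 2 ≤ (m : ℝ)) :
    (Measure.pi fun _ : Fin m => A)
        {t | ε ≤ |(1 / (m : ℝ)) * ∑ j, u (min (t j) κ) - ∫ x, u x ∂A|}
      ≤ ENNReal.ofReal δ := by
  obtain ⟨hε0, hε1⟩ := hε
  obtain ⟨hδ0, hδ1⟩ := hδ
  have h2ε : (0:ℝ) < 2 - ε := by linarith
  set L : ℝ := Real.log (2 / δ) with hL
  have hlogpos : 0 < L := Real.log_pos (by rw [lt_div_iff₀ hδ0]; linarith)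
  have hm0 : (0:ℝ) < m := lt_of_lt_of_le (by positivity) hm
  -- the capped utility function
  set g : ℝ≥0∞ → ℝ := fun x => u (min x κ) with hgdef
  have hgmeas : Measurable g := hmeas.comp (measurable_id.min measurable_const)
  have hg_lb : ∀ x, ε / 2 ≤ g x := fun x => huκ ▸ hanti (min_le_right x κ)
  have hg_ub : ∀ x, g x ≤ 1 := fun x => (hrange _).2
  have hu_lb : ∀ x, 0 ≤ u x := fun x => (hrange x).1
  have hu_ub : ∀ x, u x ≤ 1 := fun x => (hrange x).2
  have hu_le_g : ∀ x, u x ≤ g x := fun x => hanti (min_le_left x κ)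
  have hg_le : ∀ x, g x ≤ u x + ε / 2 := by
    intro x
    rcases le_total x κ with h | h
    · have : min x κ = x := min_eq_left h
      simp only [hgdef, this]
      linarith
    · have : min x κ = κ := min_eq_right h
      simp only [hgdef, this, huκ]
      linarith [hu_lb x]
  -- integrability over A
  have hintu : Integrable u A := by
    refine Integrable.mono' (integrable_const 1) hmeas.aestronglyMeasurable ?_
    exact Filter.Eventually.of_forall fun x => by
      rw [Real.norm_eq_abs, abs_le]; exact ⟨by linarith [hu_lb x], hu_ub x⟩
  have hintg : Integrable g A := by
    refine Integrable.mono' (integrable_const 1) hgmeas.aestronglyMeasurable ?_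
    exact Filter.Eventually.of_forall fun x => by
      rw [Real.norm_eq_abs, abs_le]; exact ⟨by linarith [hg_lb x], hg_ub x⟩
  set μu : ℝ := ∫ x, u x ∂A with hμu
  set μc : ℝ := ∫ x, g x ∂A with hμc
  have hμc_lb : μu ≤ μc := integral_mono hintu hintg hu_le_g
  have hμc_ub : μc ≤ μu + ε / 2 := by
    have h1 : μc ≤ ∫ x, (u x + ε / 2) ∂A :=
      integral_mono hintg (hintu.add (integrable_const _)) hg_le
    have h2 : ∫ x, (u x + ε / 2) ∂A = μu + ε / 2 := by
      rw [integral_add hintu (integrable_const _), integral_const]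
      simp [hμu]
    linarith
  -- the product measure and centered capped utilities
  set P : Measure (Fin m → ℝ≥0∞) := Measure.pi (fun _ : Fin m => A) with hP
  set Z : Fin m → (Fin m → ℝ≥0∞) → ℝ := fun j ω => g (ω j) - μc with hZ
  set Z' : Fin m → (Fin m → ℝ≥0∞) → ℝ := fun j ω => μc - g (ω j) with hZ'
  have hZmeas : ∀ j, Measurable (Z j) :=
    fun j => (hgmeas.comp (measurable_pi_apply j)).sub measurable_const
  have hZ'meas : ∀ j, Measurable (Z' j) :=
    fun j => measurable_const.sub (hgmeas.comp (measurable_pi_apply j))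
  have hindep : ProbabilityTheory.iIndepFun Z P :=
    (iIndepFun_eval (fun _ : Fin m => A)).comp (fun _ x => g x - μc)
      (fun _ => hgmeas.sub measurable_const)
  have hindep' : ProbabilityTheory.iIndepFun Z' P :=
    (iIndepFun_eval (fun _ : Fin m => A)).comp (fun _ x => μc - g x)
      (fun _ => measurable_const.sub hgmeas)
  have hZbd : ∀ j ω, Z j ω ∈ Set.Icc (ε / 2 - μc) (1 - μc) := fun j ω =>
    ⟨by simp only [hZ]; linarith [hg_lb (ω j)], by simp only [hZ]; linarith [hg_ub (ω j)]⟩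
  have hZ'bd : ∀ j ω, Z' j ω ∈ Set.Icc (μc - 1) (μc - ε / 2) := fun j ω =>
    ⟨by simp only [hZ']; linarith [hg_ub (ω j)], by simp only [hZ']; linarith [hg_lb (ω j)]⟩
  have hab : ε / 2 - μc < 1 - μc := by linarith
  have hab' : μc - 1 < μc - ε / 2 := by linarith
  have hintYj : ∀ j : Fin m, Integrable (fun ω => g (ω j)) P := by
    intro j
    refine Integrable.mono' (integrable_const 1)
      (hgmeas.comp (measurable_pi_apply j)).aestronglyMeasurable ?_
    exact Filter.Eventually.of_forall fun ω => by
      rw [Real.norm_eq_abs, abs_le]; exact ⟨by linarith [hg_lb (ω j)], hg_ub (ω j)⟩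
  have hmap : ∀ j : Fin m, ∫ ω, g (ω j) ∂P = μc := by
    intro j
    rw [hμc, ← pi_map_eval (fun _ : Fin m => A) j,
      integral_map (measurable_pi_apply j).aemeasurable hgmeas.aestronglyMeasurable]
  have hZmean : ∀ j, ∫ ω, Z j ω ∂P = 0 := by
    intro j
    simp only [hZ]
    rw [integral_sub (hintYj j) (integrable_const μc), hmap j, integral_const]
    simp
  have hZ'mean : ∀ j, ∫ ω, Z' j ω ∂P = 0 := by
    intro j
    simp only [hZ']
    rw [integral_sub (integrable_const μc) (hintYj j), hmap j, integral_const]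
    simp
  have hr : (0:ℝ) < ε / 2 := by linarith
  have htail1 := hoeff_tail P m Z hZmeas hindep hab hZbd hZmean hr
  have htail2 := hoeff_tail P m Z' hZ'meas hindep' hab' hZ'bd hZ'mean hr
  -- the exponential bound
  have hmkey : L * (2 - ε) ^ 2 ≤ 2 * m * ε ^ 2 := by
    have h1 := mul_le_mul_of_nonneg_right hm (le_of_lt (pow_pos hε0 2))
    have h2 : L / 2 * ((2 - ε) / ε) ^ 2 * ε ^ 2 = L * (2 - ε) ^ 2 / 2 := by
      field_simp
    rw [h2] at h1
    linarith
  have hexpo : ∀ c : ℝ, c = 1 - ε / 2 →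
      Real.exp (-2 * m * (ε / 2) ^ 2 / c ^ 2) ≤ δ / 2 := by
    intro c hc
    have hcpos : (0:ℝ) < c := by rw [hc]; linarith
    have hlogd : Real.log (δ / 2) = -L := by
      rw [hL, ← Real.log_inv]
      congr 1
      rw [inv_div]
    have harg : -2 * m * (ε / 2) ^ 2 / c ^ 2 ≤ Real.log (δ / 2) := by
      rw [hlogd, div_le_iff₀ (pow_pos hcpos 2), hc]
      nlinarith [hmkey]
    calc Real.exp (-2 * m * (ε / 2) ^ 2 / c ^ 2) ≤ Real.exp (Real.log (δ / 2)) :=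
          Real.exp_le_exp.mpr harg
      _ = δ / 2 := Real.exp_log (by linarith)
  have hb1 : P {ω | (m : ℝ) * (ε / 2) ≤ ∑ j, Z j ω} ≤ ENNReal.ofReal (δ / 2) := by
    rw [ENNReal.le_ofReal_iff_toReal_le (measure_ne_top P _) (by linarith)]
    refine le_trans htail1 ?_
    have : (1:ℝ) - μc - (ε / 2 - μc) = 1 - ε / 2 := by ring
    rw [this]
    exact hexpo _ rfl
  have hb2 : P {ω | (m : ℝ) * (ε / 2) ≤ ∑ j, Z' j ω} ≤ ENNReal.ofReal (δ / 2) := by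
    rw [ENNReal.le_ofReal_iff_toReal_le (measure_ne_top P _) (by linarith)]
    refine le_trans htail2 ?_
    have : μc - ε / 2 - (μc - 1) = 1 - ε / 2 := by ring
    rw [this]
    exact hexpo _ rfl
  -- set inclusion
  have hsub : {t : Fin m → ℝ≥0∞ | ε ≤ |(1 / (m : ℝ)) * ∑ j, u (min (t j) κ) - μu|}
      ⊆ {ω | (m : ℝ) * (ε / 2) ≤ ∑ j, Z j ω} ∪ {ω | (m : ℝ) * (ε / 2) ≤ ∑ j, Z' j ω} := by
    intro ω hω
    simp only [Set.mem_setOf_eq] at hω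
    have hgeq : ∀ j : Fin m, u (min (ω j) κ) = g (ω j) := fun j => rfl
    simp only [hgeq] at hω
    set Sm : ℝ := ∑ j, g (ω j) with hSm
    have hsum : ∑ j, Z j ω = Sm - (m : ℝ) * μc := by
      simp only [hZ, Finset.sum_sub_distrib, Finset.sum_const, Finset.card_univ,
        Fintype.card_fin, nsmul_eq_mul, hSm]
    have hsum' : ∑ j, Z' j ω = (m : ℝ) * μc - Sm := by
      simp only [hZ', Finset.sum_sub_distrib, Finset.sum_const, Finset.card_univ,
        Fintype.card_fin, nsmul_eq_mul, hSm]
    have hminv : (m : ℝ) * (1 / m) = 1 := by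
      field_simp
    rcases le_abs.mp hω with hcase | hcase
    · left
      simp only [Set.mem_setOf_eq, hsum]
      have h2 := mul_le_mul_of_nonneg_left hcase hm0.le
      have h3 : (m : ℝ) * (1 / m * Sm - μu) = Sm - m * μu := by
        field_simp
      rw [h3] at h2
      have h4 := mul_le_mul_of_nonneg_left hμc_ub hm0.le
      have h5 : (m : ℝ) * (μu + ε / 2) = m * μu + m * (ε / 2) := by ring
      have h6 : (m : ℝ) * ε = m * (ε / 2) + m * (ε / 2) := by ring
      linarith
    · right
      simp only [Set.mem_setOf_eq, hsum']
      rw [neg_sub] at hcase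
      have h2 := mul_le_mul_of_nonneg_left hcase hm0.le
      have h3 : (m : ℝ) * (μu - 1 / m * Sm) = m * μu - Sm := by
        field_simp
      rw [h3] at h2
      have h4 := mul_le_mul_of_nonneg_left hμc_lb hm0.le
      have h6 : (m : ℝ) * ε = m * (ε / 2) + m * (ε / 2) := by ring
      have h7 : (0:ℝ) ≤ m * (ε / 2) := by positivity
      linarith
  calc P {t | ε ≤ |(1 / (m : ℝ)) * ∑ j, u (min (t j) κ) - μu|}
      ≤ P ({ω | (m : ℝ) * (ε / 2) ≤ ∑ j, Z j ω} ∪ {ω | (m : ℝ) * (ε / 2) ≤ ∑ j, Z' j ω}) :=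
        measure_mono hsub
    _ ≤ P {ω | (m : ℝ) * (ε / 2) ≤ ∑ j, Z j ω} + P {ω | (m : ℝ) * (ε / 2) ≤ ∑ j, Z' j ω} :=
        measure_union_le _ _
    _ ≤ ENNReal.ofReal (δ / 2) + ENNReal.ofReal (δ / 2) := add_le_add hb1 hb2
    _ = ENNReal.ofReal δ := by
        rw [← ENNReal.ofReal_add (by linarith) (by linarith)]
        norm_num
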